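/- Consider the four-qubit state ρ^{(D_2^4)} = a |D_2^4⟩⟨D_2^4| + (1−a) I_4 / 16 with 0 ≤ a ≤ 1, where |D_2^4⟩ = 6^{−1/2}(|1100⟩+|1010⟩+|1001⟩+|0110⟩+|0011⟩+|0101⟩). If a > 5/13, then ρ^{(D_2^4)} is not 3-separable. -/

import Mathlib

open scoped BigOperators

noncomputable section

namespace Qubits

/-- The outer product `|ψ⟩⟨ψ|` of an `N`-qubit state vector, as a matrix in the
computational basis (indexed by configurations `Fin N → Fin 2`). -/
def outer {N : ℕ} (ψ : (Fin N → Fin 2) → ℂ) :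
    Matrix (Fin N → Fin 2) (Fin N → Fin 2) ℂ :=
  Matrix.vecMulVec ψ (star ψ)

/-- A pure `N`-qubit state is `k`-separable if `{1,…,N}` can be partitioned into `k`
(pairwise disjoint, nonempty) parts — the fibers of a surjection `P : Fin N → Fin k` —
such that `ψ` factorizes as a product of `k` functions, the `l`-th of which depends
only on the qubits in part `l`. -/
def kSepPure {N : ℕ} (k : ℕ) (ψ : (Fin N → Fin 2) → ℂ) : Prop :=
  ∃ P : Fin N → Fin k, Function.Surjective P ∧
    ∃ f : Fin k → ((Fin N → Fin 2) → ℂ),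
      (∀ l x y, (∀ i, P i = l → x i = y i) → f l x = f l y) ∧
      ∀ x, ψ x = ∏ l, f l x

/-- An `N`-qubit density matrix is `k`-separable if it is a convex combination of
projectors onto `k`-separable pure (unit) states, possibly separable with respect
to different partitions. -/
def kSep {N : ℕ} (k : ℕ) (ρ : Matrix (Fin N → Fin 2) (Fin N → Fin 2) ℂ) : Prop :=
  ∃ (n : ℕ) (p : Fin n → ℝ) (ψ : Fin n → (Fin N → Fin 2) → ℂ),
    (∀ s, 0 ≤ p s) ∧ (∑ s, p s = 1) ∧
    (∀ s, ∑ x, Complex.normSq (ψ s x) = 1) ∧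
    (∀ s, kSepPure k (ψ s)) ∧
    ρ = ∑ s, (p s : ℂ) • outer (ψ s)

/-- The `N`-qubit Dicke state with `m` excitations,
`|D_m^N⟩ = C(N,m)^{-1/2} Σ_{|S| = m} |e_S⟩`, as a vector of computational-basis
coefficients. -/
def dicke (N m : ℕ) : (Fin N → Fin 2) → ℂ :=
  fun x => if (Finset.univ.filter fun i => x i = 1).card = m
    then (((Real.sqrt (N.choose m))⁻¹ : ℝ) : ℂ) else 0

set_option maxRecDepth 10000 in
lemma fiber_structure (P : Fin 4 → Fin 3) (h : Function.Surjective P) :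
    ∃ i j k m : Fin 4, (∀ n, n = i ∨ n = j ∨ n = k ∨ n = m) ∧
      i ≠ j ∧ i ≠ k ∧ i ≠ m ∧ j ≠ k ∧ j ≠ m ∧ k ≠ m ∧
      P i = P j ∧ P i ≠ P k ∧ P i ≠ P m ∧ P k ≠ P m := by
  revert h; revert P; decide

lemma fin3_cover : ∀ (a b c : Fin 3), a ≠ b → a ≠ c → b ≠ c →
    ∀ l : Fin 3, l = a ∨ l = b ∨ l = c := by decide

open Complex

lemma step1 (A B C x y z : ℝ) :
    (A*x + B*y + C*z)^2 ≤ (A^2 + B^2/2 + C^2) * (x^2 + 2*y^2 + z^2) := by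
  nlinarith [sq_nonneg (B*x - 2*A*y), sq_nonneg (A*z - C*x), sq_nonneg (B*z - 2*C*y),
    sq_nonneg (A*x - C*z), sq_nonneg (A*x + C*z)]

lemma step2 (P Q R S : ℝ) :
    (P*R)^2 + 2*(Q*R + P*S)^2 + (Q*S)^2 ≤ 5/2 * ((P^2+Q^2)*(R^2+S^2)) := by
  nlinarith [sq_nonneg (P*R - Q*S), sq_nonneg (Q*R - P*S)]

lemma core_ineq (a00 a01 a10 a11 b0 b1 c0 c1 : ℂ) :
    Complex.normSq (a11*(b0*c0) + (a10+a01)*(b1*c0+b0*c1) + a00*(b1*c1))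
    ≤ 5/2 * ((normSq a00 + normSq a01 + normSq a10 + normSq a11) *
        ((normSq b0 + normSq b1) * (normSq c0 + normSq c1))) := by
  set T := a11*(b0*c0) + (a10+a01)*(b1*c0+b0*c1) + a00*(b1*c1) with hT
  set A := ‖a11‖; set B := ‖a10+a01‖; set C := ‖a00‖
  set x := ‖b0‖ * ‖c0‖
  set y := ‖b1‖ * ‖c0‖ + ‖b0‖ * ‖c1‖
  set z := ‖b1‖ * ‖c1‖
  have habs : ‖T‖ ≤ A*x + B*y + C*z := by
    calc ‖T‖ ≤ ‖a11*(b0*c0) + (a10+a01)*(b1*c0+b0*c1)‖ + ‖a00*(b1*c1)‖ :=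
          norm_add_le _ _
      _ ≤ ‖a11*(b0*c0)‖ + ‖(a10+a01)*(b1*c0+b0*c1)‖ + ‖a00*(b1*c1)‖ := by
          gcongr; exact norm_add_le _ _
      _ ≤ A*x + B*y + C*z := by
          simp only [norm_mul]
          gcongr
          calc ‖b1*c0+b0*c1‖ ≤ ‖b1*c0‖ + ‖b0*c1‖ := norm_add_le _ _
            _ = y := by simp [y, norm_mul]
  have hB2 : B^2 ≤ 2*((‖a01‖)^2 + (‖a10‖)^2) := by
    have hadd : B ≤ ‖a10‖ + ‖a01‖ := norm_add_le _ _
    nlinarith [norm_nonneg (a10+a01), norm_nonneg a10, norm_nonneg a01,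
      sq_nonneg (‖a10‖ - ‖a01‖)]
  have hs1 := step1 A B C x y z
  have hs2 := step2 (‖b0‖) (‖b1‖) (‖c0‖) (‖c1‖)
  have hTle : (‖T‖)^2 ≤ (A*x + B*y + C*z)^2 :=
    pow_le_pow_left₀ (norm_nonneg _) habs 2
  have h2' : x^2 + 2*y^2 + z^2 ≤ 5/2 * (((‖b0‖)^2+(‖b1‖)^2)*((‖c0‖)^2+(‖c1‖)^2)) := by
    simpa [x, y, z, mul_pow] using hs2
  have hcoef : A^2 + B^2/2 + C^2 ≤ (‖a00‖)^2 + (‖a01‖)^2 + (‖a10‖)^2 + A^2 := by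
    linarith
  have hnn1 : (0:ℝ) ≤ A^2 + B^2/2 + C^2 := by positivity
  have hnn2 : (0:ℝ) ≤ 5/2 * (((‖b0‖)^2+(‖b1‖)^2)*((‖c0‖)^2+(‖c1‖)^2)) := by positivity
  have hmul : (A^2 + B^2/2 + C^2) * (x^2 + 2*y^2 + z^2) ≤
      ((‖a00‖)^2 + (‖a01‖)^2 + (‖a10‖)^2 + A^2) *
      (5/2 * (((‖b0‖)^2+(‖b1‖)^2)*((‖c0‖)^2+(‖c1‖)^2))) := by
    apply mul_le_mul hcoef h2' _ (by positivity)
    positivity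
  have final : (‖T‖)^2 ≤
      ((‖a00‖)^2 + (‖a01‖)^2 + (‖a10‖)^2 + A^2) *
      (5/2 * (((‖b0‖)^2+(‖b1‖)^2)*((‖c0‖)^2+(‖c1‖)^2))) :=
    le_trans hTle (le_trans hs1 hmul)
  calc Complex.normSq T = (‖T‖)^2 := (Complex.sq_norm T).symm
    _ ≤ _ := final
    _ = 5/2 * ((normSq a00 + normSq a01 + normSq a10 + normSq a11) *
        ((normSq b0 + normSq b1) * (normSq c0 + normSq c1))) := by
      simp only [A, Complex.sq_norm]; ring

lemma overlap_bound (ψ : (Fin 4 → Fin 2) → ℂ)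
    (hnorm : ∑ x, Complex.normSq (ψ x) = 1) (hsep : kSepPure 3 ψ) :
    Complex.normSq (∑ x, dicke 4 2 x * ψ x) ≤ 5/12 := by
  obtain ⟨P, hsurj, f, hdep, hprod⟩ := hsep
  obtain ⟨i, j, k, m, hcov, hij, hik, him, hjk, hjm, hkm, hPij, hPik, hPim, hPkm⟩ :=
    fiber_structure P hsurj
  set ϕ : Fin 2 × Fin 2 × Fin 2 × Fin 2 → (Fin 4 → Fin 2) :=
    fun b n => if n = i then b.1 else if n = j then b.2.1 else if n = k then b.2.2.1 else b.2.2.2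
    with hϕ
  have hϕi : ∀ b, ϕ b i = b.1 := fun b => by simp [ϕ]
  have hϕj : ∀ b, ϕ b j = b.2.1 := fun b => by simp [ϕ, hij.symm]
  have hϕk : ∀ b, ϕ b k = b.2.2.1 := fun b => by simp [ϕ, hik.symm, hjk.symm]
  have hϕm : ∀ b, ϕ b m = b.2.2.2 := fun b => by simp [ϕ, him.symm, hjm.symm, hkm.symm]
  have hinj : Function.Injective ϕ := by
    intro b b' hb
    have h1 := congrFun hb i; have h2 := congrFun hb j
    have h3 := congrFun hb k; have h4 := congrFun hb m
    rw [hϕi, hϕi] at h1; rw [hϕj, hϕj] at h2; rw [hϕk, hϕk] at h3; rw [hϕm, hϕm] at h4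
    exact Prod.ext h1 (Prod.ext h2 (Prod.ext h3 h4))
  have hbij : Function.Bijective ϕ :=
    (Fintype.bijective_iff_injective_and_card ϕ).mpr ⟨hinj, by simp⟩
  -- universe of Fin 4
  have huniv : (Finset.univ : Finset (Fin 4)) = {i, j, k, m} := by
    symm; apply Finset.eq_univ_iff_forall.mpr
    intro n; rcases hcov n with h|h|h|h <;> simp [h]
  have hcard : ∀ b : Fin 2 × Fin 2 × Fin 2 × Fin 2,
      (Finset.univ.filter fun n => ϕ b n = 1).card =
      (if b.1 = 1 then 1 else 0) + ((if b.2.1 = 1 then 1 else 0) +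
        ((if b.2.2.1 = 1 then 1 else 0) + (if b.2.2.2 = 1 then 1 else 0))) := by
    intro b
    rw [Finset.card_filter, huniv]
    rw [Finset.sum_insert (by simp [hij, hik, him]),
        Finset.sum_insert (by simp [hjk, hjm]),
        Finset.sum_insert (by simp [hkm]), Finset.sum_singleton]
    rw [hϕi, hϕj, hϕk, hϕm]
  -- the three local factors
  set g : Fin 2 → Fin 2 → ℂ := fun b1 b2 => f (P i) (ϕ (b1,b2,0,0)) with hg
  set hh : Fin 2 → ℂ := fun b3 => f (P k) (ϕ (0,0,b3,0)) with hhh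
  set u : Fin 2 → ℂ := fun b4 => f (P m) (ϕ (0,0,0,b4)) with hu
  have hfPi : ∀ b, f (P i) (ϕ b) = g b.1 b.2.1 := by
    intro b
    apply hdep
    intro n hn
    rcases hcov n with h|h|h|h
    · subst h; rw [hϕi, hϕi]
    · subst h; rw [hϕj, hϕj]
    · exact absurd (h ▸ hn).symm hPik
    · exact absurd (h ▸ hn).symm hPim
  have hfPk : ∀ b, f (P k) (ϕ b) = hh b.2.2.1 := by
    intro b
    apply hdep
    intro n hn
    rcases hcov n with h|h|h|h
    · exact absurd (h ▸ hn) hPik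
    · exact absurd (hPij.trans (h ▸ hn)) hPik
    · subst h; rw [hϕk, hϕk]
    · exact absurd (h ▸ hn).symm hPkm
  have hfPm : ∀ b, f (P m) (ϕ b) = u b.2.2.2 := by
    intro b
    apply hdep
    intro n hn
    rcases hcov n with h|h|h|h
    · exact absurd (h ▸ hn) hPim
    · exact absurd (hPij.trans (h ▸ hn)) hPim
    · exact absurd (h ▸ hn) hPkm
    · subst h; rw [hϕm, hϕm]
  have huniv3 : (Finset.univ : Finset (Fin 3)) = {P i, P k, P m} := by
    symm; apply Finset.eq_univ_iff_forall.mpr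
    intro l; rcases fin3_cover (P i) (P k) (P m) hPik hPim hPkm l with h|h|h <;> simp [h]
  have hψ : ∀ b, ψ (ϕ b) = g b.1 b.2.1 * (hh b.2.2.1 * u b.2.2.2) := by
    intro b
    rw [hprod, huniv3,
      Finset.prod_insert (by simp [hPik, hPim]),
      Finset.prod_insert (by simp [hPkm]), Finset.prod_singleton,
      hfPi, hfPk, hfPm]
  have hsum1 : ∑ x, Complex.normSq (ψ x) = ∑ b, Complex.normSq (ψ (ϕ b)) :=
    (Fintype.sum_bijective ϕ hbij _ _ (fun b => rfl)).symm
  rw [hsum1] at hnorm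
  simp only [hψ, Complex.normSq_mul, Fintype.sum_prod_type, Fin.sum_univ_two] at hnorm
  have hGHU : (Complex.normSq (g 0 0) + Complex.normSq (g 0 1) + Complex.normSq (g 1 0)
      + Complex.normSq (g 1 1)) * ((Complex.normSq (hh 0) + Complex.normSq (hh 1)) *
      (Complex.normSq (u 0) + Complex.normSq (u 1))) = 1 := by
    linear_combination hnorm
  have hsum2 : ∑ x, dicke 4 2 x * ψ x = ∑ b, dicke 4 2 (ϕ b) * ψ (ϕ b) :=
    (Fintype.sum_bijective ϕ hbij _ _ (fun b => rfl)).symm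
  set r : ℝ := (Real.sqrt 6)⁻¹ with hr
  have hoverlap : ∑ x, dicke 4 2 x * ψ x =
      (r:ℂ) * (g 1 1 * (hh 0 * u 0) + (g 1 0 + g 0 1) * (hh 1 * u 0 + hh 0 * u 1)
        + g 0 0 * (hh 1 * u 1)) := by
    rw [hsum2]
    simp only [hψ, dicke, hcard, Fintype.sum_prod_type, Fin.sum_univ_two]
    norm_num [Fin.ext_iff, show Nat.choose 4 2 = 6 from rfl]
    simp only [hr]
    push_cast
    ring
  rw [hoverlap, Complex.normSq_mul, Complex.normSq_ofReal]
  have hr2 : r * r = 1/6 := by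
    rw [hr, ← mul_inv]
    rw [Real.mul_self_sqrt (by norm_num : (6:ℝ) ≥ 0)]
    norm_num
  rw [hr2]
  have hcore := core_ineq (g 0 0) (g 0 1) (g 1 0) (g 1 1) (hh 0) (hh 1) (u 0) (u 1)
  calc 1/6 * Complex.normSq (g 1 1 * (hh 0 * u 0) + (g 1 0 + g 0 1) * (hh 1 * u 0 + hh 0 * u 1)
        + g 0 0 * (hh 1 * u 1))
      ≤ 1/6 * (5/2 * ((Complex.normSq (g 0 0) + Complex.normSq (g 0 1) + Complex.normSq (g 1 0)
        + Complex.normSq (g 1 1)) * ((Complex.normSq (hh 0) + Complex.normSq (hh 1)) *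
        (Complex.normSq (u 0) + Complex.normSq (u 1))))) := by linarith
    _ = 5/12 := by rw [hGHU]; norm_num


def Lfun (ρ : Matrix (Fin 4 → Fin 2) (Fin 4 → Fin 2) ℂ) : ℂ :=
  ∑ x, ∑ y, dicke 4 2 x * ρ x y * dicke 4 2 y

lemma dicke_conj (x : Fin 4 → Fin 2) :
    (starRingEnd ℂ) (dicke 4 2 x) = dicke 4 2 x := by
  simp [dicke, apply_ite (starRingEnd ℂ)]

lemma card6 : ((Finset.univ : Finset (Fin 4 → Fin 2)).filter
    (fun x => (Finset.univ.filter fun i => x i = 1).card = 2)).card = 6 := by decide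

lemma dicke_self_sum : ∑ x, dicke 4 2 x * dicke 4 2 x = 1 := by
  simp only [dicke, show Nat.choose 4 2 = 6 from rfl, ite_mul, zero_mul, mul_ite, mul_zero]
  rw [← Finset.sum_filter]
  rw [Finset.sum_ite_of_true (fun a ha => (Finset.mem_filter.mp ha).2), Finset.sum_const, card6]
  have h6 : (Real.sqrt ((6:ℕ):ℝ))⁻¹ * (Real.sqrt ((6:ℕ):ℝ))⁻¹ = 1/6 := by
    rw [← mul_inv, Real.mul_self_sqrt (by norm_num : ((6:ℕ):ℝ) ≥ 0)]
    norm_num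
  rw [← Complex.ofReal_mul, h6]
  norm_num

lemma Lfun_outer (ψ : (Fin 4 → Fin 2) → ℂ) :
    Lfun (outer ψ) = (Complex.normSq (∑ x, dicke 4 2 x * ψ x) : ℂ) := by
  unfold Lfun outer
  rw [← Complex.mul_conj, map_sum, Finset.sum_mul_sum]
  apply Finset.sum_congr rfl; intro x _
  apply Finset.sum_congr rfl; intro y _
  simp only [Matrix.vecMulVec_apply, Pi.star_apply, RCLike.star_def, map_mul, dicke_conj]
  ring

lemma Lfun_one : Lfun 1 = 1 := by
  unfold Lfun
  simp only [Matrix.one_apply, mul_ite, mul_one, mul_zero, ite_mul, zero_mul,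
    Finset.sum_ite_eq, Finset.mem_univ, if_true]
  exact dicke_self_sum

lemma Lfun_sum {n : ℕ} (c : Fin n → ℂ) (M : Fin n → Matrix (Fin 4 → Fin 2) (Fin 4 → Fin 2) ℂ) :
    Lfun (∑ s, c s • M s) = ∑ s, c s * Lfun (M s) := by
  unfold Lfun
  simp only [Matrix.sum_apply, Matrix.smul_apply, smul_eq_mul, Finset.mul_sum, Finset.sum_mul]
  refine (Finset.sum_congr rfl fun x _ => Finset.sum_comm).trans (Finset.sum_comm.trans ?_)
  apply Finset.sum_congr rfl; intro s _
  apply Finset.sum_congr rfl; intro x _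
  apply Finset.sum_congr rfl; intro y _
  ring

lemma Lfun_add_smul (c1 c2 : ℂ) (M1 M2 : Matrix (Fin 4 → Fin 2) (Fin 4 → Fin 2) ℂ) :
    Lfun (c1 • M1 + c2 • M2) = c1 * Lfun M1 + c2 * Lfun M2 := by
  unfold Lfun
  simp only [Matrix.add_apply, Matrix.smul_apply, smul_eq_mul, Finset.mul_sum]
  rw [← Finset.sum_add_distrib]
  apply Finset.sum_congr rfl; intro x _
  rw [← Finset.sum_add_distrib]
  apply Finset.sum_congr rfl; intro y _
  ring

end Qubits

open Qubits in
/-- If `a > 5/13` then `a |D_2^4⟩⟨D_2^4| + (1−a) I/16` is not 3-separable. -/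
theorem dicke24_noise_not_threeSep
    (a : ℝ) (ha0 : 0 ≤ a) (ha1 : a ≤ 1) (ha : a > 5 / 13) :
    ¬ kSep 3 ((a : ℂ) • outer (dicke 4 2) +
        (((1 - a) / 16 : ℝ) : ℂ) • (1 : Matrix (Fin 4 → Fin 2) (Fin 4 → Fin 2) ℂ)) := by
  intro hsep
  obtain ⟨n, p, ψ, hp, hpsum, hnorm, hkp, hrho⟩ := hsep
  have hL := congrArg Lfun hrho
  rw [Lfun_add_smul, Lfun_outer, Lfun_one, Lfun_sum, dicke_self_sum] at hL
  simp only [Lfun_outer, map_one, mul_one] at hL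
  have hL2 : ((a + (1-a)/16 : ℝ) : ℂ) =
      ((∑ s, p s * Complex.normSq (∑ x, dicke 4 2 x * ψ s x) : ℝ) : ℂ) := by
    push_cast
    push_cast at hL
    linear_combination hL
  have hR : a + (1-a)/16 = ∑ s, p s * Complex.normSq (∑ x, dicke 4 2 x * ψ s x) :=
    Complex.ofReal_inj.mp hL2
  have hbound : ∑ s, p s * Complex.normSq (∑ x, dicke 4 2 x * ψ s x) ≤ 5/12 := by
    calc ∑ s, p s * Complex.normSq (∑ x, dicke 4 2 x * ψ s x)
        ≤ ∑ s, p s * (5/12) := by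
          apply Finset.sum_le_sum
          intro s _
          exact mul_le_mul_of_nonneg_left (Qubits.overlap_bound (ψ s) (hnorm s) (hkp s)) (hp s)
      _ = 5/12 := by rw [← Finset.sum_mul, hpsum, one_mul]
  linarith [hR, hbound]
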